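/- Theorem 3.2(1): Let p be an odd prime, let k₁, k₂, k₃, m₁, m₂ be natural numbers, n = k₁ + k₂ + k₃ + m₁ + m₂ and k = k₁ + k₂ + k₃. Let A₁ (size k₁×k₃), B₁ (k₁×k₂), A₂, B₂ (k₁×m₁), A₃, B₃ (k₁×m₂), A₄ (k₂×m₁), B₄ (k₃×m₂) be matrices over F_p, regarded as matrices over R via c ↦ (c,c). Let C be the R-submodule of R^n generated by the rows of the block matrix G with column blocks of sizes k₁, k₂, k₃, m₁, m₂ and row blocks of sizes k₁, k₂, k₃: G = [ I_{k₁} | (1-v)B₁ | vA₁ | vA₂+(1-v)B₂ | vA₃+(1-v)B₃ ; 0 | vI_{k₂} | 0 | vA₄ | 0 ; 0 | 0 | (1-v)I_{k₃} | 0 | (1-v)B₄ ]. Set E₁ = (−A₂ | A₁B₄ − A₃)ᵀ and E₂ = (B₁A₄ − B₂ | −B₃)ᵀ (each of size (n−k)×k₁, the transpose of a horizontal concatenation), P = (−A₄ | 0)ᵀ of size (n−k)×k₂, Q = (0 | −B₄)ᵀ of size (n−k)×k₃. Then the dual code C^⊥ equals the R-submodule of R^n generated by the rows of the block matrix H with column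 blocks of sizes k₁, k₂, k₃, n−k and row blocks of sizes n−k, k₃, k₂: H = [ vE₁+(1-v)E₂ | P | Q | I_{n−k} ; v(−A₁ᵀ) | 0 | vI_{k₃} | 0 ; (1-v)(−B₁ᵀ) | (1-v)I_{k₂} | 0 | 0 ]. -/

import Mathlib

open Matrix

/-- The Euclidean dual of a linear code. -/
def dualCode {S : Type*} [CommRing S] {ι : Type*} [Fintype ι]
    (C : Submodule S (ι → S)) : Submodule S (ι → S) where
  carrier := {u | ∀ w ∈ C, ∑ i, u i * w i = 0}
  zero_mem' := by intro w hw; simp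
  add_mem' := by
    intro a b ha hb w hw
    simp only [Set.mem_setOf_eq] at ha hb ⊢
    simp only [Pi.add_apply, add_mul, Finset.sum_add_distrib, ha w hw, hb w hw, add_zero]
  smul_mem' := by
    intro c a ha w hw
    simp only [Set.mem_setOf_eq] at ha ⊢
    simp only [Pi.smul_apply, smul_eq_mul, mul_assoc, ← Finset.mul_sum, ha w hw, mul_zero]

variable (p : ℕ)

/-- `F_p → R = F_p × F_p`, `c ↦ (c, c)`. -/
def eR : ZMod p → ZMod p × ZMod p := fun c => (c, c)

/-- `v = (0, 1)`. -/
def vR : ZMod p × ZMod p := (0, 1)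

/-- `1 - v = (1, 0)`. -/
def uR : ZMod p × ZMod p := (1, 0)

variable {k₁ k₂ k₃ m₁ m₂ : ℕ}
  (A₁ : Matrix (Fin k₁) (Fin k₃) (ZMod p)) (B₁ : Matrix (Fin k₁) (Fin k₂) (ZMod p))
  (A₂ B₂ : Matrix (Fin k₁) (Fin m₁) (ZMod p)) (A₃ B₃ : Matrix (Fin k₁) (Fin m₂) (ZMod p))
  (A₄ : Matrix (Fin k₂) (Fin m₁) (ZMod p)) (B₄ : Matrix (Fin k₃) (Fin m₂) (ZMod p))

/-- The generator matrix
`G = [ I | (1-v)B₁ | vA₁ | vA₂+(1-v)B₂ | vA₃+(1-v)B₃ ; 0 | vI | 0 | vA₄ | 0 ;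
  0 | 0 | (1-v)I | 0 | (1-v)B₄ ]`, with column blocks of sizes `k₁, k₂, k₃, m₁, m₂` and row
blocks of sizes `k₁, k₂, k₃`. -/
def Gmat : Matrix (Fin k₁ ⊕ Fin k₂ ⊕ Fin k₃)
    (Fin k₁ ⊕ Fin k₂ ⊕ Fin k₃ ⊕ Fin m₁ ⊕ Fin m₂) (ZMod p × ZMod p) :=
  Matrix.of fun r c =>
    match r, c with
    | .inl i, .inl j => if i = j then 1 else 0
    | .inl i, .inr (.inl j) => uR p * eR p (B₁ i j)
    | .inl i, .inr (.inr (.inl j)) => vR p * eR p (A₁ i j)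
    | .inl i, .inr (.inr (.inr (.inl j))) => vR p * eR p (A₂ i j) + uR p * eR p (B₂ i j)
    | .inl i, .inr (.inr (.inr (.inr j))) => vR p * eR p (A₃ i j) + uR p * eR p (B₃ i j)
    | .inr (.inl _), .inl _ => 0
    | .inr (.inl i), .inr (.inl j) => if i = j then vR p else 0
    | .inr (.inl _), .inr (.inr (.inl _)) => 0
    | .inr (.inl i), .inr (.inr (.inr (.inl j))) => vR p * eR p (A₄ i j)
    | .inr (.inl _), .inr (.inr (.inr (.inr _))) => 0
    | .inr (.inr _), .inl _ => 0
    | .inr (.inr _), .inr (.inl _) => 0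
    | .inr (.inr i), .inr (.inr (.inl j)) => if i = j then uR p else 0
    | .inr (.inr _), .inr (.inr (.inr (.inl _))) => 0
    | .inr (.inr i), .inr (.inr (.inr (.inr j))) => uR p * eR p (B₄ i j)

/-- `E₁ = (−A₂ | A₁B₄ − A₃)ᵀ`. -/
def E₁mat : Matrix (Fin m₁ ⊕ Fin m₂) (Fin k₁) (ZMod p) :=
  (Matrix.fromCols (-A₂) (A₁ * B₄ - A₃))ᵀ

/-- `E₂ = (B₁A₄ − B₂ | −B₃)ᵀ`. -/
def E₂mat : Matrix (Fin m₁ ⊕ Fin m₂) (Fin k₁) (ZMod p) :=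
  (Matrix.fromCols (B₁ * A₄ - B₂) (-B₃))ᵀ

/-- `P = (−A₄ | 0)ᵀ`. -/
def Pmat : Matrix (Fin m₁ ⊕ Fin m₂) (Fin k₂) (ZMod p) :=
  (Matrix.fromCols (-A₄) (0 : Matrix (Fin k₂) (Fin m₂) (ZMod p)))ᵀ

/-- `Q = (0 | −B₄)ᵀ`. -/
def Qmat : Matrix (Fin m₁ ⊕ Fin m₂) (Fin k₃) (ZMod p) :=
  (Matrix.fromCols (0 : Matrix (Fin k₃) (Fin m₁) (ZMod p)) (-B₄))ᵀ

/-- The parity check matrix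
`H = [ vE₁+(1-v)E₂ | P | Q | I ; v(−A₁ᵀ) | 0 | vI | 0 ; (1-v)(−B₁ᵀ) | (1-v)I | 0 | 0 ]`,
with column blocks of sizes `k₁, k₂, k₃, n−k = m₁+m₂` and row blocks of sizes
`n−k = m₁+m₂, k₃, k₂`. -/
def Hmat : Matrix ((Fin m₁ ⊕ Fin m₂) ⊕ Fin k₃ ⊕ Fin k₂)
    (Fin k₁ ⊕ Fin k₂ ⊕ Fin k₃ ⊕ Fin m₁ ⊕ Fin m₂) (ZMod p × ZMod p) :=
  Matrix.of fun r c =>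
    match r, c with
    | .inl s, .inl j =>
        vR p * eR p (E₁mat p A₁ A₂ A₃ B₄ s j) + uR p * eR p (E₂mat p B₁ B₂ B₃ A₄ s j)
    | .inl s, .inr (.inl j) => eR p (Pmat p A₄ s j)
    | .inl s, .inr (.inr (.inl j)) => eR p (Qmat p B₄ s j)
    | .inl s, .inr (.inr (.inr (.inl t))) => if s = Sum.inl t then 1 else 0
    | .inl s, .inr (.inr (.inr (.inr t))) => if s = Sum.inr t then 1 else 0
    | .inr (.inl i), .inl j => vR p * eR p ((-A₁ᵀ) i j)
    | .inr (.inl _), .inr (.inl _) => 0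
    | .inr (.inl i), .inr (.inr (.inl j)) => if i = j then vR p else 0
    | .inr (.inl _), .inr (.inr (.inr _)) => 0
    | .inr (.inr i), .inl j => uR p * eR p ((-B₁ᵀ) i j)
    | .inr (.inr i), .inr (.inl j) => if i = j then uR p else 0
    | .inr (.inr _), .inr (.inr _) => 0


/-- Inner product with `u` as a linear map. -/
def ipL {S : Type*} [CommRing S] {ι : Type*} [Fintype ι] (u : ι → S) :
    (ι → S) →ₗ[S] S where
  toFun w := ∑ i, u i * w i
  map_add' a b := by simp [mul_add, Finset.sum_add_distrib]
  map_smul' c a := by simp [Finset.mul_sum, mul_left_comm]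

lemma mem_dualCode_span_iff {S : Type*} [CommRing S] {ι : Type*} [Fintype ι]
    (s : Set (ι → S)) (u : ι → S) :
    u ∈ dualCode (Submodule.span S s) ↔ ∀ w ∈ s, ∑ i, u i * w i = 0 := by
  have hker : (∀ w ∈ Submodule.span S s, ∑ i, u i * w i = 0) ↔
      Submodule.span S s ≤ LinearMap.ker (ipL u) := by
    constructor
    · intro h w hw; exact h w hw
    · intro h w hw; exact h hw
  constructor
  · intro h w hw; exact h w (Submodule.subset_span hw)
  · intro h w hw
    exact (hker.2 (Submodule.span_le.2 fun x hx => h x hx)) w hw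


lemma sum_if_const {α M : Type*} [Fintype α] [AddCommMonoid M] (c : Prop) [Decidable c]
    (f : α → M) : (∑ a : α, if c then f a else 0) = if c then ∑ a : α, f a else 0 := by
  split <;> simp

set_option maxHeartbeats 2000000 in
lemma orthGH (r : Fin k₁ ⊕ Fin k₂ ⊕ Fin k₃) (r' : (Fin m₁ ⊕ Fin m₂) ⊕ Fin k₃ ⊕ Fin k₂) :
    ∑ j, Gmat p A₁ B₁ A₂ B₂ A₃ B₃ A₄ B₄ r j *
      Hmat p A₁ B₁ A₂ B₂ A₃ B₃ A₄ B₄ r' j = 0 := by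
  rcases r with i | i | i <;> rcases r' with (s | s) | s | s <;>
    simp [Gmat, Hmat, Fintype.sum_sum_type, E₁mat, E₂mat, Pmat, Qmat, vR, uR, eR,
      Prod.ext_iff, Prod.fst_sum, Prod.snd_sum, Matrix.mul_apply, Finset.mul_sum,
      Finset.sum_mul, mul_comm, mul_left_comm, Finset.sum_ite_eq, Finset.sum_ite_eq',
      sub_mul, mul_sub, Finset.sum_sub_distrib]

set_option maxHeartbeats 4000000 in
lemma keyEq (x : (Fin k₁ ⊕ Fin k₂ ⊕ Fin k₃ ⊕ Fin m₁ ⊕ Fin m₂) → ZMod p × ZMod p)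
    (hr : ∀ r, ∑ j, x j * Gmat p A₁ B₁ A₂ B₂ A₃ B₃ A₄ B₄ r j = 0) :
    x = (∑ s, (Sum.elim (fun t => x (.inr (.inr (.inr (.inl t)))))
              (fun t => x (.inr (.inr (.inr (.inr t))))) s) •
            (fun j => Hmat p A₁ B₁ A₂ B₂ A₃ B₃ A₄ B₄ (.inl s) j))
      + (∑ i, (x (.inr (.inr (.inl i))) + ∑ t, eR p (B₄ i t) * x (.inr (.inr (.inr (.inr t))))) •
            (fun j => Hmat p A₁ B₁ A₂ B₂ A₃ B₃ A₄ B₄ (.inr (.inl i)) j))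
      + (∑ i, (x (.inr (.inl i)) + ∑ t, eR p (A₄ i t) * x (.inr (.inr (.inr (.inl t))))) •
            (fun j => Hmat p A₁ B₁ A₂ B₂ A₃ B₃ A₄ B₄ (.inr (.inr i)) j)) := by
  funext j
  rcases j with j | j | j | j | j
  · -- k₁ column
    have h1 := hr (.inl j)
    have e1 : (∑ t : Fin m₁, ∑ i : Fin k₂,
          (x (Sum.inr (Sum.inr (Sum.inr (Sum.inl t))))).1 * (B₁ j i * A₄ i t))
        = ∑ i : Fin k₂, ∑ t : Fin m₁,
          A₄ i t * (x (Sum.inr (Sum.inr (Sum.inr (Sum.inl t))))).1 * B₁ j i := by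
      rw [Finset.sum_comm]
      exact Finset.sum_congr rfl fun i _ => Finset.sum_congr rfl fun t _ => by ring
    have e2 : (∑ t : Fin m₂, ∑ i : Fin k₃,
          (x (Sum.inr (Sum.inr (Sum.inr (Sum.inr t))))).2 * (A₁ j i * B₄ i t))
        = ∑ i : Fin k₃, ∑ t : Fin m₂,
          B₄ i t * (x (Sum.inr (Sum.inr (Sum.inr (Sum.inr t))))).2 * A₁ j i := by
      rw [Finset.sum_comm]
      exact Finset.sum_congr rfl fun i _ => Finset.sum_congr rfl fun t _ => by ring
    simp only [Gmat, Fintype.sum_sum_type, Matrix.of_apply, mul_ite, mul_one, mul_zero,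
      ite_mul, zero_mul, one_mul, Finset.sum_ite_eq, Finset.sum_ite_eq', Finset.mem_univ,
      if_true, Prod.ext_iff, Prod.fst_sum, Prod.snd_sum, Prod.fst_mul, Prod.snd_mul,
      Prod.fst_add, Prod.snd_add, vR, uR, eR, Finset.sum_const_zero, add_zero, zero_add,
      mul_zero, zero_mul, Prod.fst_zero, Prod.snd_zero, mul_add, add_mul,
      mul_comm, mul_left_comm, mul_assoc] at h1
    simp only [mul_comm, mul_left_comm, mul_assoc] at e1 e2
    simp only [Pi.add_apply, Finset.sum_apply, Pi.smul_apply, smul_eq_mul, Hmat,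
      Matrix.of_apply, Fintype.sum_sum_type, Pmat, Qmat, E₁mat, E₂mat,
      Matrix.fromCols, Matrix.transpose_apply, Matrix.neg_apply, Matrix.sub_apply,
      Matrix.zero_apply, Matrix.mul_apply, Sum.elim_inl, Sum.elim_inr,
      mul_ite, mul_one, mul_zero, ite_mul, zero_mul, one_mul,
      Finset.sum_ite_eq, Finset.sum_ite_eq', Finset.mem_univ, if_true,
      Prod.ext_iff, Prod.fst_sum, Prod.snd_sum, Prod.fst_mul, Prod.snd_mul,
      Prod.fst_add, Prod.snd_add, vR, uR, eR, Finset.sum_const_zero, add_zero, zero_add,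
      Prod.fst_zero, Prod.snd_zero, Prod.fst_one, Prod.snd_one,
      mul_neg, neg_mul, mul_sub, sub_mul, mul_add, add_mul, neg_zero, sub_zero, zero_sub,
      Finset.sum_add_distrib, Finset.sum_sub_distrib, Finset.sum_neg_distrib,
      Finset.mul_sum, Finset.sum_mul, mul_comm, mul_left_comm, mul_assoc]
    exact ⟨by linear_combination h1.1 - e1, by linear_combination h1.2 - e2⟩
  · -- k₂ column
    have h2 := hr (.inr (.inl j))
    simp only [Gmat, Fintype.sum_sum_type, Matrix.of_apply, mul_ite, mul_one, mul_zero,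
      ite_mul, zero_mul, one_mul, Finset.sum_ite_eq, Finset.sum_ite_eq', Finset.mem_univ,
      if_true, Prod.ext_iff, Prod.fst_sum, Prod.snd_sum, Prod.fst_mul, Prod.snd_mul,
      Prod.fst_add, Prod.snd_add, vR, uR, eR, Finset.sum_const_zero, add_zero, zero_add,
      mul_zero, zero_mul, Prod.fst_zero, Prod.snd_zero, mul_add, add_mul,
      mul_comm, mul_left_comm, mul_assoc] at h2
    simp only [Pi.add_apply, Finset.sum_apply, Pi.smul_apply, smul_eq_mul, Hmat,
      Matrix.of_apply, Fintype.sum_sum_type, Pmat, Qmat, E₁mat, E₂mat,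
      Matrix.fromCols, Matrix.transpose_apply, Matrix.neg_apply, Matrix.sub_apply,
      Matrix.zero_apply, Matrix.mul_apply, Sum.elim_inl, Sum.elim_inr,
      mul_ite, mul_one, mul_zero, ite_mul, zero_mul, one_mul,
      Finset.sum_ite_eq, Finset.sum_ite_eq', Finset.mem_univ, if_true,
      Prod.ext_iff, Prod.fst_sum, Prod.snd_sum, Prod.fst_mul, Prod.snd_mul,
      Prod.fst_add, Prod.snd_add, vR, uR, eR, Finset.sum_const_zero, add_zero, zero_add,
      Prod.fst_zero, Prod.snd_zero, Prod.fst_one, Prod.snd_one,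
      mul_neg, neg_mul, mul_sub, sub_mul, mul_add, add_mul, neg_zero, sub_zero, zero_sub,
      Finset.sum_add_distrib, Finset.sum_sub_distrib, Finset.sum_neg_distrib,
      Finset.mul_sum, Finset.sum_mul, mul_comm, mul_left_comm, mul_assoc,
      apply_ite Prod.fst, apply_ite Prod.snd, sum_if_const]
    exact ⟨by ring, by linear_combination h2.2⟩
  · -- k₃ column
    have h3 := hr (.inr (.inr j))
    simp only [Gmat, Fintype.sum_sum_type, Matrix.of_apply, mul_ite, mul_one, mul_zero,
      ite_mul, zero_mul, one_mul, Finset.sum_ite_eq, Finset.sum_ite_eq', Finset.mem_univ,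
      if_true, Prod.ext_iff, Prod.fst_sum, Prod.snd_sum, Prod.fst_mul, Prod.snd_mul,
      Prod.fst_add, Prod.snd_add, vR, uR, eR, Finset.sum_const_zero, add_zero, zero_add,
      mul_zero, zero_mul, Prod.fst_zero, Prod.snd_zero, mul_add, add_mul,
      mul_comm, mul_left_comm, mul_assoc] at h3
    simp only [Pi.add_apply, Finset.sum_apply, Pi.smul_apply, smul_eq_mul, Hmat,
      Matrix.of_apply, Fintype.sum_sum_type, Pmat, Qmat, E₁mat, E₂mat,
      Matrix.fromCols, Matrix.transpose_apply, Matrix.neg_apply, Matrix.sub_apply,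
      Matrix.zero_apply, Matrix.mul_apply, Sum.elim_inl, Sum.elim_inr,
      mul_ite, mul_one, mul_zero, ite_mul, zero_mul, one_mul,
      Finset.sum_ite_eq, Finset.sum_ite_eq', Finset.mem_univ, if_true,
      Prod.ext_iff, Prod.fst_sum, Prod.snd_sum, Prod.fst_mul, Prod.snd_mul,
      Prod.fst_add, Prod.snd_add, vR, uR, eR, Finset.sum_const_zero, add_zero, zero_add,
      Prod.fst_zero, Prod.snd_zero, Prod.fst_one, Prod.snd_one,
      mul_neg, neg_mul, mul_sub, sub_mul, mul_add, add_mul, neg_zero, sub_zero, zero_sub,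
      Finset.sum_add_distrib, Finset.sum_sub_distrib, Finset.sum_neg_distrib,
      Finset.mul_sum, Finset.sum_mul, mul_comm, mul_left_comm, mul_assoc,
      apply_ite Prod.fst, apply_ite Prod.snd, sum_if_const]
    exact ⟨by linear_combination h3.1, by ring⟩
  · -- m₁ column
    simp only [Pi.add_apply, Finset.sum_apply, Pi.smul_apply, smul_eq_mul, Hmat,
      Matrix.of_apply, Fintype.sum_sum_type, Pmat, Qmat, E₁mat, E₂mat,
      Matrix.fromCols, Matrix.transpose_apply, Matrix.neg_apply, Matrix.sub_apply,
      Matrix.zero_apply, Matrix.mul_apply, Sum.elim_inl, Sum.elim_inr,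
      mul_ite, mul_one, mul_zero, ite_mul, zero_mul, one_mul,
      Finset.sum_ite_eq, Finset.sum_ite_eq', Finset.mem_univ, if_true,
      Finset.sum_const_zero, add_zero, zero_add]
    simp
  · -- m₂ column
    simp only [Pi.add_apply, Finset.sum_apply, Pi.smul_apply, smul_eq_mul, Hmat,
      Matrix.of_apply, Fintype.sum_sum_type, Pmat, Qmat, E₁mat, E₂mat,
      Matrix.fromCols, Matrix.transpose_apply, Matrix.neg_apply, Matrix.sub_apply,
      Matrix.zero_apply, Matrix.mul_apply, Sum.elim_inl, Sum.elim_inr,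
      mul_ite, mul_one, mul_zero, ite_mul, zero_mul, one_mul,
      Finset.sum_ite_eq, Finset.sum_ite_eq', Finset.mem_univ, if_true,
      Finset.sum_const_zero, add_zero, zero_add]
    simp
/-- Theorem 3.2(1): for odd `p`, the dual of the code generated by the rows of `G` is the
code generated by the rows of `H`; i.e. `H` is a generator matrix for `C^⊥` (and hence a
parity check matrix for `C`). -/
theorem dual_of_code_gen_by_G (hp : p.Prime) (hodd : Odd p) :
    dualCode (Submodule.span (ZMod p × ZMod p)
        (Set.range fun r j => Gmat p A₁ B₁ A₂ B₂ A₃ B₃ A₄ B₄ r j)) =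
      Submodule.span (ZMod p × ZMod p)
        (Set.range fun r j => Hmat p A₁ B₁ A₂ B₂ A₃ B₃ A₄ B₄ r j) := by
  classical
  ext x
  rw [mem_dualCode_span_iff]
  constructor
  · intro hx
    have hr : ∀ r, ∑ j, x j * Gmat p A₁ B₁ A₂ B₂ A₃ B₃ A₄ B₄ r j = 0 := by
      intro r
      exact hx _ ⟨r, rfl⟩
    rw [keyEq p A₁ B₁ A₂ B₂ A₃ B₃ A₄ B₄ x hr]
    refine Submodule.add_mem _ (Submodule.add_mem _ ?_ ?_) ?_ <;>
      exact Submodule.sum_mem _ fun s _ =>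
        Submodule.smul_mem _ _ (Submodule.subset_span ⟨_, rfl⟩)
  · intro hx w hw
    obtain ⟨r, rfl⟩ := hw
    have hker : x ∈ LinearMap.ker (ipL (fun j => Gmat p A₁ B₁ A₂ B₂ A₃ B₃ A₄ B₄ r j)) := by
      refine Submodule.span_le.2 ?_ hx
      rintro _ ⟨r', rfl⟩
      simp only [SetLike.mem_coe, LinearMap.mem_ker]
      exact orthGH p A₁ B₁ A₂ B₂ A₃ B₃ A₄ B₄ r r'
    have hk : ∑ j, Gmat p A₁ B₁ A₂ B₂ A₃ B₃ A₄ B₄ r j * x j = 0 := hker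
    have hcomm : (∑ i, x i * Gmat p A₁ B₁ A₂ B₂ A₃ B₃ A₄ B₄ r i)
        = ∑ j, Gmat p A₁ B₁ A₂ B₂ A₃ B₃ A₄ B₄ r j * x j :=
      Finset.sum_congr rfl fun i _ => mul_comm _ _
    rw [hcomm, hk]
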